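/- Let m ≥ 1, let a > 0, let C : ℝ^m → ℝ be continuous, let w_f ∈ ℝ^m, and fix a coordinate index i ∈ {1,…,m}. Suppose the two slices of C at ℓ∞-distance a from w_f in the i-th coordinate agree: for every vector u in the (m−1)-dimensional closed ℓ∞-box of radius a centered at (w_f)_{\i}, the value of C at the point with i-th coordinate (w_f)_i + a and remaining coordinates u equals the value of C at the point with i-th coordinate (w_f)_i − a and remaining coordinates u. Then the partial derivative of the smoothed function C̄ in the i-th coordinate direction at w_f is zero. -/

import Mathlib

open MeasureTheory

noncomputable section

/-- The closed ℓ∞-box `D(w, ς)` of radius `ς` centered at `w`. -/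
def box {m : ℕ} (w : Fin m → ℝ) (ς : ℝ) : Set (Fin m → ℝ) :=
  {w' | ∀ i, |w' i - w i| ≤ ς}

/-- The smoothed function `C̄(w) = (2a)^{-m} ∫_{D(w,a)} C(w') dw'`. -/
def smoothed {m : ℕ} (a : ℝ) (C : (Fin m → ℝ) → ℝ) (w : Fin m → ℝ) : ℝ :=
  ((2 * a) ^ m)⁻¹ * ∫ w' in box w a, C w'

/-- The point of `ℝ^m` whose `i`-th coordinate is `c` and whose remaining
coordinates are given by `u`. -/
def insertAt {m : ℕ} (i : Fin m) (c : ℝ) (u : {j : Fin m // j ≠ i} → ℝ) :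
    Fin m → ℝ :=
  fun j => if h : j = i then c else u ⟨j, h⟩

/-- The `(m-1)`-dimensional closed ℓ∞-box of radius `ς` centered at the vector of
the coordinates of `w` other than the `i`-th one. -/
def subBox {m : ℕ} (i : Fin m) (w : Fin m → ℝ) (ς : ℝ) :
    Set ({j : Fin m // j ≠ i} → ℝ) :=
  {u | ∀ j : {j : Fin m // j ≠ i}, |u j - w j.1| ≤ ς}

lemma volume_pi_fintype_irrel {ι : Type*} (i1 i2 : Fintype ι) :
    (@MeasureSpace.pi ι i1 (fun _ => ℝ) (fun _ => Real.measureSpace)).volume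
    = (@MeasureSpace.pi ι i2 (fun _ => ℝ) (fun _ => Real.measureSpace)).volume := by
  cases Subsingleton.elim i1 i2; rfl

lemma insertAt_apply_same {m : ℕ} (i : Fin m) (c : ℝ) (u : {j : Fin m // j ≠ i} → ℝ) :
    insertAt i c u i = c := dif_pos rfl

lemma insertAt_apply_ne {m : ℕ} {i j : Fin m} (h : j ≠ i) (c : ℝ)
    (u : {j : Fin m // j ≠ i} → ℝ) : insertAt i c u j = u ⟨j, h⟩ := dif_neg h

theorem hasDerivAt_smoothed_coord_zero_of_slices_agree
    {m : ℕ} (hm : 1 ≤ m) (a : ℝ) (ha : 0 < a)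
    (C : (Fin m → ℝ) → ℝ) (hC : Continuous C)
    (w_f : Fin m → ℝ) (i : Fin m)
    (hslices : ∀ u ∈ subBox i w_f a,
      C (insertAt i (w_f i + a) u) = C (insertAt i (w_f i - a) u)) :
    HasDerivAt (fun t : ℝ => smoothed a C (Function.update w_f i t)) 0 (w_f i) := by
  set p : Fin m → Prop := fun j => j = i with hp
  set e := MeasurableEquiv.piEquivPiSubtypeProd (fun _ : Fin m => ℝ) p with he
  set B : Set ({j : Fin m // j ≠ i} → ℝ) := subBox i w_f a with hB
  -- B as a product of intervals
  have hBpi : B = Set.univ.pi fun j : {j : Fin m // j ≠ i} =>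
      Set.Icc (w_f j.1 - a) (w_f j.1 + a) := by
    ext u
    simp only [hB, subBox, Set.mem_setOf_eq, Set.mem_pi, Set.mem_univ, forall_true_left,
      Set.mem_Icc, abs_le]
    constructor
    · intro h j
      obtain ⟨h1, h2⟩ := h j
      constructor <;> linarith
    · intro h j
      obtain ⟨h1, h2⟩ := h j
      constructor <;> linarith
  have hBcompact : IsCompact B := by
    rw [hBpi]; exact isCompact_univ_pi fun j => isCompact_Icc
  have hBmeas : MeasurableSet B := hBcompact.isClosed.measurableSet
  -- the slice integral
  set g : ℝ → ℝ := fun c => ∫ u in B, C (insertAt i c u) with hg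
  have hinsert : Continuous
      (fun z : ℝ × ({j : Fin m // j ≠ i} → ℝ) => insertAt i z.1 z.2) := by
    apply continuous_pi
    intro j
    by_cases h : j = i
    · simp only [insertAt, dif_pos h]
      exact continuous_fst
    · simp only [insertAt, dif_neg h]
      exact (continuous_apply _).comp continuous_snd
  have hgcont : Continuous g := by
    have := continuous_parametric_integral_of_continuous
      (f := fun (c : ℝ) (u : {j : Fin m // j ≠ i} → ℝ) => C (insertAt i c u))
      (μ := volume) (hC.comp hinsert) hBcompact
    exact this
  -- e.symm in terms of insertAt
  have hesymm : ∀ (v : {j : Fin m // p j} → ℝ) (u : {j : Fin m // ¬ p j} → ℝ),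
      e.symm (v, u) = insertAt i (v ⟨i, rfl⟩) u := by
    intro v u
    funext j
    show (if h : p j then v ⟨j, h⟩ else u ⟨j, h⟩) = insertAt i (v ⟨i, rfl⟩) u j
    by_cases h : j = i
    · rw [dif_pos h, insertAt, dif_pos h]
      exact congrArg v (Subtype.ext h)
    · rw [dif_neg h, insertAt, dif_neg h]
  have hval : ∀ (v : {j : Fin m // p j} → ℝ) (j' : {j : Fin m // p j}),
      v j' = v ⟨i, rfl⟩ := fun v j' => congrArg v (Subtype.ext j'.2)
  -- the key computation
  have key : ∀ t : ℝ, (∫ w' in box (Function.update w_f i t) a, C w')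
      = ∫ c in Set.Icc (t - a) (t + a), g c := by
    intro t
    set A : Set ({j : Fin m // p j} → ℝ) :=
      Set.univ.pi fun _ => Set.Icc (t - a) (t + a) with hA
    have hAcompact : IsCompact A := isCompact_univ_pi fun _ => isCompact_Icc
    have hpre : (⇑e.symm) ⁻¹' (box (Function.update w_f i t) a) = A ×ˢ B := by
      ext z
      obtain ⟨v, u⟩ := z
      simp only [Set.mem_preimage, hesymm, box, Set.mem_setOf_eq, Set.mem_prod, hA,
        Set.mem_pi, Set.mem_univ, forall_true_left, Set.mem_Icc, hB, subBox]
      constructor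
      · intro h
        refine ⟨fun j' => ?_, fun j' => ?_⟩
        · have h0 := h i
          rw [insertAt_apply_same, Function.update_self, abs_le] at h0
          rw [hval v j']
          constructor <;> linarith [h0.1, h0.2]
        · have hj := h j'.1
          rw [insertAt_apply_ne j'.2, Function.update_of_ne j'.2] at hj
          simpa using hj
      · intro h j
        by_cases hj : j = i
        · rw [hj, insertAt_apply_same, Function.update_self, abs_le]
          have := h.1 ⟨i, rfl⟩
          constructor <;> linarith [this.1, this.2]
        · rw [insertAt_apply_ne hj, Function.update_of_ne hj]
          exact h.2 ⟨j, hj⟩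
    have hmp : MeasurePreserving (⇑e.symm)
        ((volume : Measure ({j : Fin m // p j} → ℝ)).prod
          (volume : Measure ({j : Fin m // ¬ p j} → ℝ)))
        (volume : Measure (Fin m → ℝ)) := by
      have h0 := (volume_preserving_piEquivPiSubtypeProd (fun _ : Fin m => ℝ) p).symm
      convert h0 using 2
      · rfl
      · congr
        exact Subsingleton.elim _ _
    have hcontF : Continuous fun z : ({j : Fin m // p j} → ℝ) × ({j : Fin m // ¬ p j} → ℝ) =>
        C (e.symm z) := by
      have heq : (fun z : ({j : Fin m // p j} → ℝ) × ({j : Fin m // ¬ p j} → ℝ) =>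
          C (e.symm z)) = fun z => C (insertAt i (z.1 ⟨i, rfl⟩) z.2) := by
        funext z; rw [hesymm]
      rw [heq]
      have base : Continuous fun z : ({j : Fin m // p j} → ℝ) × ({j : Fin m // ¬ p j} → ℝ) =>
          ((z.1 ⟨i, rfl⟩ : ℝ), z.2) :=
        ((continuous_apply _).comp continuous_fst).prodMk continuous_snd
      exact (hC.comp hinsert).comp base
    have hint : IntegrableOn (fun z => C (e.symm z)) (A ×ˢ B)
        ((volume : Measure ({j : Fin m // p j} → ℝ)).prod volume) := by
      have h1 : IntegrableOn (fun z => C (e.symm z)) (A ×ˢ B)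
          (volume : Measure (({j : Fin m // p j} → ℝ) × ({j : Fin m // ¬ p j} → ℝ))) :=
        hcontF.continuousOn.integrableOn_compact (hAcompact.prod hBcompact)
      rw [Measure.volume_eq_prod] at h1
      exact h1
    calc ∫ w' in box (Function.update w_f i t) a, C w'
        = ∫ z in (⇑e.symm) ⁻¹' (box (Function.update w_f i t) a), C (e.symm z)
            ∂((volume : Measure ({j : Fin m // p j} → ℝ)).prod volume) := by
          rw [hmp.setIntegral_preimage_emb e.symm.measurableEmbedding C]
      _ = ∫ z in A ×ˢ B, C (e.symm z)
            ∂((volume : Measure ({j : Fin m // p j} → ℝ)).prod volume) := by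
          rw [hpre]
      _ = ∫ v in A, ∫ u in B, C (e.symm (v, u)) := setIntegral_prod _ hint
      _ = ∫ v in A, g (v ⟨i, rfl⟩) := by
          refine setIntegral_congr_fun hAcompact.isClosed.measurableSet fun v hv => ?_
          refine setIntegral_congr_fun hBmeas fun u hu => ?_
          rw [hesymm]
      _ = ∫ c in Set.Icc (t - a) (t + a), g c := by
          have hmpu : MeasurePreserving (⇑(MeasurableEquiv.funUnique {j : Fin m // p j} ℝ).symm)
              (volume : Measure ℝ) (volume : Measure ({j : Fin m // p j} → ℝ)) := by
            have h0 := (volume_preserving_funUnique {j : Fin m // p j} ℝ).symm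
            convert h0 using 2 <;> congr
          rw [← hmpu.setIntegral_preimage_emb
            (MeasurableEquiv.funUnique {j : Fin m // p j} ℝ).symm.measurableEmbedding
            (fun v => g (v ⟨i, rfl⟩)) A]
          have hAeq : (⇑(MeasurableEquiv.funUnique {j : Fin m // p j} ℝ).symm) ⁻¹' A
              = Set.Icc (t - a) (t + a) := by
            ext c
            simp only [Set.mem_preimage, hA, Set.mem_pi, Set.mem_univ, forall_true_left,
              Set.mem_Icc]
            constructor
            · intro h; exact h ⟨i, rfl⟩
            · intro h j'; exact h
          rw [hAeq]
          rfl
  -- now the derivative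
  set s0 : ℝ := w_f i with hs0
  have hgi : ∀ x y : ℝ, IntervalIntegrable g volume x y := fun x y =>
    hgcont.intervalIntegrable x y
  have hfun : (fun t : ℝ => smoothed a C (Function.update w_f i t))
      = fun t => ((2 * a) ^ m)⁻¹ *
        ((∫ c in s0..(t + a), g c) - (∫ c in s0..(t - a), g c)) := by
    funext t
    rw [smoothed, key t]
    congr 1
    rw [MeasureTheory.integral_Icc_eq_integral_Ioc,
      ← intervalIntegral.integral_of_le (by linarith : t - a ≤ t + a)]
    have := intervalIntegral.integral_add_adjacent_intervals (hgi s0 (t - a)) (hgi (t - a) (t + a))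
    linarith
  have h1 : HasDerivAt (fun x => ∫ c in s0..x, g c) (g (s0 + a)) (s0 + a) :=
    (hgcont.integral_hasStrictDerivAt s0 (s0 + a)).hasDerivAt
  have h2 : HasDerivAt (fun x => ∫ c in s0..x, g c) (g (s0 - a)) (s0 - a) :=
    (hgcont.integral_hasStrictDerivAt s0 (s0 - a)).hasDerivAt
  have H1 : HasDerivAt (fun t : ℝ => ∫ c in s0..(t + a), g c) (g (s0 + a)) s0 := by
    have := h1.comp s0 ((hasDerivAt_id s0).add_const a)
    simpa [Function.comp_def] using this
  have H2 : HasDerivAt (fun t : ℝ => ∫ c in s0..(t - a), g c) (g (s0 - a)) s0 := by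
    have := h2.comp s0 ((hasDerivAt_id s0).sub_const a)
    simpa [Function.comp_def] using this
  have hzero : g (s0 + a) = g (s0 - a) :=
    setIntegral_congr_fun hBmeas fun u hu => hslices u hu
  have final := (H1.sub H2).const_mul (((2 * a) ^ m)⁻¹)
  rw [hfun]
  refine final.congr_deriv ?_
  rw [hzero, sub_self, mul_zero]
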